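/- arXiv:1208.5820 — 3 statements merged into one kernel-verified Lean document; each statement's English description precedes it below -/
import Mathlib

section
/- Fix an integer g ≥ 1. For each ℓ ≥ 1 let λ_{g,ℓ} denote the unique positive real root of the polynomial x^{ℓg+1} − (x^{ℓg} + x^{(ℓ−1)g} + ⋯ + x^g + 1). Then the sequence (λ_{g,ℓ})_{ℓ≥1} is strictly increasing in ℓ, and lim_{ℓ→∞} λ_{g,ℓ} = λ_g, where λ_g denotes the unique real root greater than 1 of x^g − x^{g−1} − 1 = 0. -/
/-- Fix `g ≥ 1`. For each `ℓ ≥ 1` let `λ_{g,ℓ} = lam ℓ` be the unique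
positive real root of `x^{ℓg+1} − (x^{ℓg} + x^{(ℓ−1)g} + ⋯ + x^g + 1)` (the
characteristic polynomial of the Kangaroo recurrence with `ℓ` hops of length `g`).
Then `(λ_{g,ℓ})_{ℓ ≥ 1}` is strictly increasing in `ℓ`, and `λ_{g,ℓ} → λ_g` as `ℓ → ∞`,
where `λ_g` is the unique real root greater than `1` of `x^g − x^{g−1} − 1 = 0`. -/
theorem kangaroo_root_monotone_limit (g : ℕ) (hg : 1 ≤ g)
    (lam : ℕ → ℝ)
    (hlam : ∀ ℓ, 1 ≤ ℓ → 0 < lam ℓ ∧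
      lam ℓ ^ (ℓ * g + 1) = ∑ m ∈ Finset.range (ℓ + 1), lam ℓ ^ (m * g))
    (hlamuniq : ∀ ℓ, 1 ≤ ℓ → ∀ x : ℝ, 0 < x →
      x ^ (ℓ * g + 1) = ∑ m ∈ Finset.range (ℓ + 1), x ^ (m * g) → x = lam ℓ)
    (lamg : ℝ) (hlamg : 1 < lamg)
    (hlamgroot : lamg ^ g - lamg ^ (g - 1) - 1 = 0)
    (hlamguniq : ∀ x : ℝ, 1 < x → x ^ g - x ^ (g - 1) - 1 = 0 → x = lamg) :
    (∀ ℓ₁ ℓ₂, 1 ≤ ℓ₁ → ℓ₁ < ℓ₂ → lam ℓ₁ < lam ℓ₂) ∧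
      Filter.Tendsto lam Filter.atTop (nhds lamg) := by
  obtain ⟨k, rfl⟩ : ∃ k, g = k + 1 := ⟨g - 1, (Nat.succ_pred_eq_of_pos hg).symm⟩
  simp only [Nat.add_sub_cancel] at hlamgroot hlamguniq
  -- strict monotonicity of x ↦ x^(k+1) - x^k - 1 on (1, ∞)
  have hmono : ∀ a b : ℝ, 1 < a → a < b → a^(k+1) - a^k - 1 < b^(k+1) - b^k - 1 := by
    intro a b ha hab
    have h1 : a^k ≤ b^k := pow_le_pow_left₀ (by linarith) (le_of_lt hab) k
    have h2 : (0:ℝ) < a^k := pow_pos (by linarith) k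
    have h3 : a^(k+1) = a^k * a := pow_succ a k
    have h4 : b^(k+1) = b^k * b := pow_succ b k
    nlinarith
  -- basic facts about each root
  have fact : ∀ ℓ, 1 ≤ ℓ → 1 < lam ℓ ∧
      lam ℓ ^ (ℓ*(k+1)+1) * (lam ℓ^(k+1) - lam ℓ^k - 1) = -1 := by
    intro ℓ hℓ
    obtain ⟨hpos, hroot⟩ := hlam ℓ hℓ
    have hsub : ({0, ℓ} : Finset ℕ) ⊆ Finset.range (ℓ+1) := by
      intro x hx; simp at hx; rcases hx with rfl | rfl <;> simp <;> omega
    have hge : (1:ℝ) + lam ℓ ^ (ℓ*(k+1)) ≤ ∑ m ∈ Finset.range (ℓ + 1), lam ℓ ^ (m*(k+1)) := by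
      have := Finset.sum_le_sum_of_subset_of_nonneg hsub
        (fun i _ _ => le_of_lt (pow_pos hpos (i*(k+1))))
      rwa [Finset.sum_pair (by omega : (0:ℕ) ≠ ℓ), zero_mul, pow_zero] at this
    have hone : 1 < lam ℓ := by
      have hE : (0:ℝ) < lam ℓ ^ (ℓ*(k+1)) := pow_pos hpos _
      have h5 : lam ℓ ^ (ℓ*(k+1)+1) = lam ℓ ^ (ℓ*(k+1)) * lam ℓ := pow_succ _ _
      nlinarith [hroot, hge]
    have hgt1 : 1 < lam ℓ ^ (k+1) := one_lt_pow₀ hone (by omega)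
    have hne : lam ℓ ^ (k+1) ≠ 1 := ne_of_gt hgt1
    have hsum : ∑ m ∈ Finset.range (ℓ + 1), lam ℓ ^ (m*(k+1))
        = ((lam ℓ^(k+1))^(ℓ+1) - 1)/(lam ℓ^(k+1) - 1) := by
      simp only [pow_mul']
      rw [geom_sum_eq hne]
    have hd : lam ℓ^(k+1) - 1 ≠ 0 := sub_ne_zero.mpr hne
    have key : lam ℓ ^ (ℓ*(k+1)+1) * (lam ℓ^(k+1) - 1) = (lam ℓ^(k+1))^(ℓ+1) - 1 := by
      rw [hroot, hsum]; field_simp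
    exact ⟨hone, by linear_combination key⟩
  -- each root is below lamg
  have hlt : ∀ ℓ, 1 ≤ ℓ → lam ℓ < lamg := by
    intro ℓ hℓ
    obtain ⟨hone, hid⟩ := fact ℓ hℓ
    have hneg : lam ℓ^(k+1) - lam ℓ^k - 1 < 0 := by
      nlinarith [pow_pos (by linarith : (0:ℝ) < lam ℓ) (ℓ*(k+1)+1)]
    by_contra hle
    push_neg at hle
    rcases eq_or_lt_of_le hle with heq | hlt'
    · rw [heq] at hlamgroot; linarith
    · have := hmono lamg (lam ℓ) hlamg hlt'; linarith
  -- monotonicity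
  have mono : ∀ ℓ₁ ℓ₂, 1 ≤ ℓ₁ → ℓ₁ < ℓ₂ → lam ℓ₁ < lam ℓ₂ := by
    intro ℓ₁ ℓ₂ h1 h12
    obtain ⟨hone, hid⟩ := fact ℓ₁ h1
    set a := lam ℓ₁ with ha
    have hapos : (0:ℝ) < a := by linarith
    obtain ⟨d, rfl⟩ : ∃ d, ℓ₂ = (ℓ₁ + d) + 1 := ⟨ℓ₂ - ℓ₁ - 1, by omega⟩
    set L2 := (ℓ₁ + d) + 1 with hL2
    have hP : 1 < a ^ ((d+1)*(k+1)) := one_lt_pow₀ hone (by positivity)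
    have hgt1 : 1 < a ^ (k+1) := one_lt_pow₀ hone (by omega)
    have hdpos : (0:ℝ) < a^(k+1) - 1 := by linarith
    have e2 : a ^ (L2*(k+1)+1) * (a^(k+1) - 1)
        = (a^(k+1))^(L2+1) - a^((d+1)*(k+1)) := by
      linear_combination (a ^ ((d+1)*(k+1))) * hid
    have hsum2 : ∑ m ∈ Finset.range (L2+1), a ^ (m*(k+1))
        = ((a^(k+1))^(L2+1) - 1)/(a^(k+1) - 1) := by
      simp only [pow_mul']
      rw [geom_sum_eq (ne_of_gt hgt1)]
    have hlt0 : a ^ (L2*(k+1)+1) < ∑ m ∈ Finset.range (L2+1), a ^ (m*(k+1)) := by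
      rw [hsum2, lt_div_iff₀ hdpos]
      linarith [e2, hP]
    -- IVT on F
    set F : ℝ → ℝ := fun x => x ^ (L2*(k+1)+1) - ∑ m ∈ Finset.range (L2+1), x ^ (m*(k+1)) with hF
    have hFcont : Continuous F := by
      apply Continuous.sub (continuous_pow _)
      exact continuous_finset_sum _ fun i _ => continuous_pow _
    set M : ℝ := a + (L2 + 1) with hM
    have hL2pos : (0:ℝ) < (L2:ℝ) + 1 := by positivity
    have hMa : a ≤ M := by simp [hM]; positivity
    have hM1 : 1 < M := by simp [hM]; nlinarith
    have hMl : ((L2:ℝ) + 1) < M := by simp [hM]; linarith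
    have hFM : 0 ≤ F M := by
      have hterm : ∀ m ∈ Finset.range (L2+1), M^(m*(k+1)) ≤ M^(L2*(k+1)) := by
        intro m hm
        exact pow_le_pow_right₀ (le_of_lt hM1)
          (Nat.mul_le_mul_right _ (Nat.lt_succ_iff.mp (Finset.mem_range.mp hm)))
      have hsle : ∑ m ∈ Finset.range (L2+1), M^(m*(k+1)) ≤ (L2+1) * M^(L2*(k+1)) := by
        calc ∑ m ∈ Finset.range (L2+1), M^(m*(k+1))
            ≤ ∑ _m ∈ Finset.range (L2+1), M^(L2*(k+1)) := Finset.sum_le_sum hterm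
          _ = (L2+1) * M^(L2*(k+1)) := by
              rw [Finset.sum_const, Finset.card_range]; push_cast; ring
      have hMp : (0:ℝ) < M^(L2*(k+1)) := pow_pos (by linarith) _
      have hpow : M ^ (L2*(k+1)+1) = M^(L2*(k+1)) * M := pow_succ _ _
      simp only [hF]
      push_cast at hsle hMl
      nlinarith
    have hFa : F a < 0 := by simp only [hF]; linarith
    obtain ⟨c, hcmem, hFc⟩ := intermediate_value_Icc hMa hFcont.continuousOn
      ⟨le_of_lt hFa, hFM⟩
    have hca : a ≤ c := hcmem.1
    have hcpos : 0 < c := by linarith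
    have hroot : c ^ (L2*(k+1)+1) = ∑ m ∈ Finset.range (L2+1), c ^ (m*(k+1)) := by
      have := hFc; simp only [hF] at this; linarith
    have hceq : c = lam L2 := hlamuniq L2 (by omega) c hcpos hroot
    have hne' : a ≠ c := by
      intro h; rw [← h] at hFc; linarith
    rw [← hceq]
    exact lt_of_le_of_ne hca hne'
  refine ⟨mono, ?_⟩
  -- limit
  have hone1 : 1 < lam 1 := (fact 1 le_rfl).1
  set μ : ℕ → ℝ := fun n => lam (n+1) with hμ
  have hμmono : Monotone μ :=
    monotone_nat_of_le_succ fun n => le_of_lt (mono (n+1) (n+2) (by omega) (by omega))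
  have hbdd : BddAbove (Set.range μ) := by
    refine ⟨lamg, ?_⟩
    rintro x ⟨n, rfl⟩
    exact le_of_lt (hlt (n+1) (by omega))
  have htend : Filter.Tendsto μ Filter.atTop (nhds (⨆ n, μ n)) :=
    tendsto_atTop_ciSup hμmono hbdd
  set L := ⨆ n, μ n with hLdef
  have hμ0 : lam 1 ≤ L := le_ciSup hbdd 0
  have hL1 : 1 < L := lt_of_lt_of_le hone1 hμ0
  have hμge : ∀ n, lam 1 ≤ μ n := fun n => hμmono (Nat.zero_le n)
  have hμ1 : ∀ n, 1 < μ n := fun n => lt_of_lt_of_le hone1 (hμge n)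
  -- squeeze
  have hsq : Filter.Tendsto (fun n => μ n^(k+1) - μ n^k - 1) Filter.atTop (nhds 0) := by
    have hlow : Filter.Tendsto (fun n : ℕ => -((1/lam 1)^n)) Filter.atTop (nhds 0) := by
      have h01 : (0:ℝ) ≤ 1/lam 1 := by positivity
      have h11 : (1:ℝ)/lam 1 < 1 := by
        rw [div_lt_one (by linarith)]; linarith
      simpa using (tendsto_pow_atTop_nhds_zero_of_lt_one h01 h11).neg
    apply tendsto_of_tendsto_of_tendsto_of_le_of_le hlow tendsto_const_nhds
    · intro n
      show -(1/lam 1)^n ≤ μ n ^(k+1) - μ n^k - 1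
      have hone : 1 < μ n := hμ1 n
      have hid : μ n ^ ((n+1)*(k+1)+1) * (μ n^(k+1) - μ n^k - 1) = -1 :=
        (fact (n+1) (by omega)).2
      have hEpos : (0:ℝ) < μ n ^ ((n+1)*(k+1)+1) := pow_pos (by linarith [hμ1 n]) _
      have hval : μ n^(k+1) - μ n^k - 1 = -1 / μ n ^ ((n+1)*(k+1)+1) := by
        field_simp
        linarith [hid]
      rw [hval]
      have hpow : lam 1 ^ n ≤ μ n ^ ((n+1)*(k+1)+1) := by
        calc lam 1 ^ n ≤ μ n ^ n := pow_le_pow_left₀ (by linarith) (hμge n) n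
          _ ≤ μ n ^ ((n+1)*(k+1)+1) :=
              pow_le_pow_right₀ (le_of_lt (hμ1 n)) (by nlinarith)
      have hl1p : (0:ℝ) < lam 1 ^ n := pow_pos (by linarith) n
      rw [neg_div, neg_le_neg_iff, div_pow, one_pow]
      exact one_div_le_one_div_of_le hl1p hpow
    · intro n
      show μ n ^(k+1) - μ n^k - 1 ≤ (0:ℝ)
      have hid : μ n ^ ((n+1)*(k+1)+1) * (μ n^(k+1) - μ n^k - 1) = -1 :=
        (fact (n+1) (by omega)).2
      have hEpos : (0:ℝ) < μ n ^ ((n+1)*(k+1)+1) := pow_pos (by linarith [hμ1 n]) _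
      nlinarith
  have hcont : Filter.Tendsto (fun n => μ n^(k+1) - μ n^k - 1) Filter.atTop
      (nhds (L^(k+1) - L^k - 1)) :=
    ((htend.pow (k+1)).sub (htend.pow k)).sub tendsto_const_nhds
  have hL0 : L^(k+1) - L^k - 1 = 0 := tendsto_nhds_unique hcont hsq
  have hLeq : L = lamg := hlamguniq L hL1 hL0
  rw [← hLeq]
  exact (Filter.tendsto_add_atTop_iff_nat 1).mp htend
end

section
/- For each integer g ≥ 2, let λ_g denote the unique real root greater than 1 of x^g − x^{g−1} − 1 = 0. Then lim_{g→∞} λ_g^{−g} · (g / log g) = 1; equivalently, λ_g^g ∼ g/log g as g → ∞, so that λ_g → 1 and the writing λ_g = e^{α(g)/g} gives α(g) = log g − log log g + o(log log g). -/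
open Filter Real

private lemma kang_mono_f (n : ℕ) {x y : ℝ} (hx : 0 ≤ x) (hxy : x < y) :
    (1 + x) ^ n * x < (1 + y) ^ n * y :=
  calc (1 + x) ^ n * x ≤ (1 + y) ^ n * x :=
        mul_le_mul_of_nonneg_right (pow_le_pow_left₀ (by linarith) (by linarith) n) hx
    _ < (1 + y) ^ n * y := mul_lt_mul_of_pos_left hxy (pow_pos (by linarith) n)

private lemma kang_log_div_tendsto :
    Tendsto (fun g : ℕ => Real.log g / (g : ℝ)) atTop (nhds 0) :=
  (Real.isLittleO_log_id_atTop.tendsto_div_nhds_zero).comp tendsto_natCast_atTop_atTop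

private lemma kang_log_ge_one {g : ℕ} (hg : 3 ≤ g) : 1 ≤ Real.log g := by
  have hgr : (3 : ℝ) ≤ (g : ℝ) := by exact_mod_cast hg
  rw [Real.le_log_iff_exp_le (by linarith)]
  have := Real.exp_one_lt_d9
  linarith

/-- For each `g ≥ 2` let `λ_g = lam g` be the unique real root greater
than `1` of `x^g − x^{g−1} − 1 = 0`. Then `λ_g^{−g} · (g / log g) → 1` as `g → ∞`;
equivalently `λ_g^g ∼ g / log g`, so in particular `λ_g → 1`. -/
theorem kangaroo_limit_root_asymptotic
    (lam : ℕ → ℝ)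
    (hlam : ∀ g, 2 ≤ g → 1 < lam g ∧ lam g ^ g - lam g ^ (g - 1) - 1 = 0)
    (hlamuniq : ∀ g, 2 ≤ g → ∀ x : ℝ, 1 < x → x ^ g - x ^ (g - 1) - 1 = 0 → x = lam g) :
    Filter.Tendsto (fun g : ℕ => lam g ^ (-(g : ℤ)) * ((g : ℝ) / Real.log g))
        Filter.atTop (nhds 1) ∧
      Filter.Tendsto lam Filter.atTop (nhds 1) := by
  -- the basic equation: λ^{g-1} (λ - 1) = 1
  have key : ∀ g : ℕ, 2 ≤ g → lam g ^ (g - 1) * (lam g - 1) = 1 := by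
    intro g hg
    obtain ⟨h1, h2⟩ := hlam g hg
    have hg1 : g - 1 + 1 = g := by omega
    have hpow : lam g ^ g = lam g ^ (g - 1) * lam g := by
      rw [← pow_succ, hg1]
    nlinarith [h2, hpow]
  have keps : ∀ g : ℕ, 2 ≤ g → (1 + (lam g - 1)) ^ (g - 1) * (lam g - 1) = 1 := by
    intro g hg
    have := key g hg
    have h : 1 + (lam g - 1) = lam g := by ring
    rw [h]; exact this
  -- Upper bound: eventually lam g - 1 ≤ (1+δ) log g / g
  have UP : ∀ δ : ℝ, 0 < δ → ∀ᶠ g : ℕ in atTop, lam g - 1 ≤ (1 + δ) * Real.log g / g := by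
    intro δ hδ
    have hsum : Tendsto (fun g : ℕ => ((1 + δ) * Real.log g + (1 + δ)) / (g : ℝ))
        atTop (nhds 0) := by
      have h1 := kang_log_div_tendsto.const_mul (1 + δ)
      have h2 := tendsto_one_div_atTop_nhds_zero_nat.const_mul (1 + δ)
      have := h1.add h2
      simp only [mul_zero, add_zero] at this
      refine this.congr fun g => ?_
      ring
    have hev : ∀ᶠ g : ℕ in atTop, ((1 + δ) * Real.log g + (1 + δ)) / (g : ℝ) < δ :=
      hsum.eventually_lt_const hδ
    filter_upwards [hev, eventually_ge_atTop 3] with g hevg hg3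
    have hg2 : 2 ≤ g := by omega
    have hgr : (3 : ℝ) ≤ (g : ℝ) := by exact_mod_cast hg3
    have hgpos : (0 : ℝ) < g := by linarith
    have hL1 : 1 ≤ Real.log g := kang_log_ge_one hg3
    set L := Real.log g with hLdef
    set b := (1 + δ) * L / g with hbdef
    have hb0 : 0 < b := by positivity
    have hb1 : (0 : ℝ) < 1 + b := by linarith
    have E : (1 + δ) * L + (1 + δ) ≤ δ * g := by
      rw [div_lt_iff₀ hgpos] at hevg
      linarith
    have hbg : b * g = (1 + δ) * L := by
      rw [hbdef]; exact div_mul_cancel₀ _ hgpos.ne'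
    -- b (L+1) ≤ δ L
    have hbL : b * (L + 1) ≤ δ * L := by
      have h1 : b * (L + 1) = ((1 + δ) * L + (1 + δ)) * (L / g) := by
        rw [hbdef]; field_simp
      have h2 : ((1 + δ) * L + (1 + δ)) * (L / g) ≤ (δ * g) * (L / g) :=
        mul_le_mul_of_nonneg_right E (by positivity)
      have h3 : (δ * g) * (L / g) = δ * L := by field_simp
      linarith [h1, h2, h3]
    -- central inequality: L (1+b) ≤ (g-1) b
    have hcentral : L * (1 + b) ≤ ((g : ℝ) - 1) * b := by nlinarith [hbg, hbL]
    have hLle : L ≤ ((g : ℝ) - 1) * (b / (1 + b)) := by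
      rw [← mul_div_assoc, le_div_iff₀ hb1]
      exact hcentral
    -- -log b ≤ L
    have hlogb : Real.log b = Real.log (1 + δ) + Real.log L - L := by
      rw [hbdef, Real.log_div (by positivity) (by positivity),
        Real.log_mul (by positivity) (by positivity)]
    have hneglogb : -Real.log b ≤ L := by
      have h1 : 0 ≤ Real.log (1 + δ) := Real.log_nonneg (by linarith)
      have h2 : 0 ≤ Real.log L := Real.log_nonneg hL1
      rw [hlogb]; linarith
    -- lower bound for (1+b)^(g-1)
    have hloglb : b / (1 + b) ≤ Real.log (1 + b) := by
      have := Real.one_sub_inv_le_log_of_pos hb1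
      have h2 : 1 - (1 + b)⁻¹ = b / (1 + b) := by field_simp; ring
      linarith [h2 ▸ this]
    have hm : ((g - 1 : ℕ) : ℝ) = (g : ℝ) - 1 := by
      have : 1 ≤ g := by omega
      push_cast [Nat.cast_sub this]; ring
    have hpowlb : Real.exp (((g : ℝ) - 1) * (b / (1 + b))) ≤ (1 + b) ^ (g - 1) := by
      have h1 : (1 + b) ^ (g - 1) = Real.exp (((g - 1 : ℕ) : ℝ) * Real.log (1 + b)) := by
        rw [Real.exp_nat_mul, Real.exp_log hb1]
      rw [h1, hm, Real.exp_le_exp]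
      exact mul_le_mul_of_nonneg_left hloglb (by linarith)
    -- f(b) ≥ 1
    have hfb : 1 ≤ (1 + b) ^ (g - 1) * b := by
      have h1 : b⁻¹ ≤ Real.exp (((g : ℝ) - 1) * (b / (1 + b))) := by
        rw [← Real.exp_log (inv_pos.mpr hb0), Real.exp_le_exp, Real.log_inv]
        exact hneglogb.trans hLle
      calc (1 : ℝ) = b⁻¹ * b := by field_simp
        _ ≤ Real.exp (((g : ℝ) - 1) * (b / (1 + b))) * b :=
            mul_le_mul_of_nonneg_right h1 hb0.le
        _ ≤ (1 + b) ^ (g - 1) * b := mul_le_mul_of_nonneg_right hpowlb hb0.le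
    -- conclude by monotonicity
    by_contra hcon
    push_neg at hcon
    have := kang_mono_f (g - 1) hb0.le hcon
    rw [keps g hg2] at this
    linarith
  -- Lower bound: eventually c log g / g ≤ lam g - 1
  have LOW : ∀ c : ℝ, 0 < c → c < 1 → ∀ᶠ g : ℕ in atTop,
      c * Real.log g / g ≤ lam g - 1 := by
    intro c hc hc1
    have hr : Tendsto (fun g : ℕ => Real.log g / (g : ℝ) ^ (1 - c : ℝ)) atTop (nhds 0) :=
      ((isLittleO_log_rpow_atTop (by linarith)).tendsto_div_nhds_zero).comp
        tendsto_natCast_atTop_atTop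
    have hev : ∀ᶠ g : ℕ in atTop, c * (Real.log g / (g : ℝ) ^ (1 - c : ℝ)) < 1 := by
      have := hr.const_mul c
      simp only [mul_zero] at this
      exact this.eventually_lt_const one_pos
    filter_upwards [hev, eventually_ge_atTop 3] with g hevg hg3
    have hg2 : 2 ≤ g := by omega
    obtain ⟨hl1, _⟩ := hlam g hg2
    have hgr : (3 : ℝ) ≤ (g : ℝ) := by exact_mod_cast hg3
    have hgpos : (0 : ℝ) < g := by linarith
    have hL1 : 1 ≤ Real.log g := kang_log_ge_one hg3
    set L := Real.log g with hLdef
    set a := c * L / g with hadef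
    have ha0 : 0 < a := by positivity
    have hm : ((g - 1 : ℕ) : ℝ) = (g : ℝ) - 1 := by
      have : 1 ≤ g := by omega
      push_cast [Nat.cast_sub this]; ring
    -- f(a) ≤ c L / g^{1-c} < 1
    have hexp : (1 + a) ^ (g - 1) ≤ Real.exp ((g : ℝ) * a) := by
      have h1 : (1 + a) ^ (g - 1) ≤ Real.exp a ^ (g - 1) :=
        pow_le_pow_left₀ (by linarith) (by linarith [Real.add_one_le_exp a]) _
      have h2 : Real.exp a ^ (g - 1) = Real.exp (((g : ℝ) - 1) * a) := by
        rw [← Real.exp_nat_mul, hm]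
      rw [h2] at h1
      exact h1.trans (Real.exp_le_exp.mpr (by nlinarith))
    have hga : (g : ℝ) * a = c * L := by
      rw [hadef, mul_div_assoc']; exact mul_div_cancel_left₀ _ hgpos.ne'
    have hgc : Real.exp ((g : ℝ) * a) = (g : ℝ) ^ (c : ℝ) := by
      rw [hga, Real.rpow_def_of_pos hgpos, mul_comm]
    have hrpos : (0 : ℝ) < (g : ℝ) ^ (1 - c : ℝ) := Real.rpow_pos_of_pos hgpos _
    have hsplit : (g : ℝ) ^ (c : ℝ) * ((g : ℝ) ^ (1 - c : ℝ)) = g := by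
      rw [← Real.rpow_add hgpos]
      norm_num
    have hfa : (1 + a) ^ (g - 1) * a < 1 := by
      have h1 : (1 + a) ^ (g - 1) * a ≤ (g : ℝ) ^ (c : ℝ) * a :=
        mul_le_mul_of_nonneg_right (hgc ▸ hexp) ha0.le
      have h2 : (g : ℝ) ^ (c : ℝ) * a = c * (L / (g : ℝ) ^ (1 - c : ℝ)) := by
        rw [hadef]
        field_simp
        linear_combination hsplit
      calc (1 + a) ^ (g - 1) * a ≤ (g : ℝ) ^ (c : ℝ) * a := h1
        _ = c * (L / (g : ℝ) ^ (1 - c : ℝ)) := h2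
        _ < 1 := hevg
    by_contra hcon
    push_neg at hcon
    have := kang_mono_f (g - 1) (by linarith : (0 : ℝ) ≤ lam g - 1) hcon
    rw [keps g hg2] at this
    linarith [hfa]
  -- Main asymptotic: (lam g - 1) * (g / log g) → 1
  have M : Tendsto (fun g : ℕ => (lam g - 1) * ((g : ℝ) / Real.log g)) atTop (nhds 1) := by
    rw [Metric.tendsto_nhds]
    intro δ hδ
    set η := min δ 1 / 2 with hηdef
    have hη0 : 0 < η := by
      have : 0 < min δ 1 := lt_min hδ one_pos
      positivity
    have hη1 : η ≤ 1 / 2 := by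
      have : min δ 1 ≤ 1 := min_le_right _ _
      rw [hηdef]; linarith
    have hηδ : η < δ := by
      have : min δ 1 ≤ δ := min_le_left _ _
      rw [hηdef]; linarith
    filter_upwards [UP η hη0, LOW (1 - η) (by linarith) (by linarith),
      eventually_ge_atTop 3] with g h1 h2 hg3
    have hgr : (3 : ℝ) ≤ (g : ℝ) := by exact_mod_cast hg3
    have hgpos : (0 : ℝ) < g := by linarith
    have hL1 : 1 ≤ Real.log g := kang_log_ge_one hg3
    set L := Real.log g with hLdef
    have hLpos : 0 < L := by linarith
    have hq : (0 : ℝ) ≤ (g : ℝ) / L := by positivity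
    have hup : (lam g - 1) * ((g : ℝ) / L) ≤ 1 + η := by
      have := mul_le_mul_of_nonneg_right h1 hq
      have heq : (1 + η) * L / g * ((g : ℝ) / L) = 1 + η := by
        field_simp
      linarith [heq ▸ this]
    have hlow : 1 - η ≤ (lam g - 1) * ((g : ℝ) / L) := by
      have := mul_le_mul_of_nonneg_right h2 hq
      have heq : (1 - η) * L / g * ((g : ℝ) / L) = 1 - η := by
        field_simp
      linarith [heq ▸ this]
    rw [Real.dist_eq, abs_lt]
    constructor <;> linarith
  -- lam → 1
  have hLAM : Tendsto lam atTop (nhds 1) := by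
    have h0 : Tendsto (fun g : ℕ => lam g - 1) atTop (nhds 0) := by
      apply squeeze_zero' (g := fun g : ℕ => (1 + 1) * Real.log g / g)
      · filter_upwards [eventually_ge_atTop 2] with g hg
        linarith [(hlam g hg).1]
      · exact UP 1 one_pos
      · have := kang_log_div_tendsto.const_mul (1 + 1)
        simp only [mul_zero] at this
        refine this.congr fun g => ?_
        ring
    have := h0.add_const 1
    simp only [zero_add] at this
    refine this.congr fun g => by ring
  refine ⟨?_, hLAM⟩
  -- rewrite lam g ^ (-g) * (g / log g) = ((lam g - 1) * (g / log g)) / lam g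
  have hEq : (fun g : ℕ => lam g ^ (-(g : ℤ)) * ((g : ℝ) / Real.log g)) =ᶠ[atTop]
      fun g : ℕ => ((lam g - 1) * ((g : ℝ) / Real.log g)) / lam g := by
    filter_upwards [eventually_ge_atTop 2] with g hg
    obtain ⟨hl1, _⟩ := hlam g hg
    have hlpos : (0 : ℝ) < lam g := by linarith
    have hkey := key g hg
    have hg1 : g - 1 + 1 = g := by omega
    have hpoweq : lam g ^ g = lam g ^ (g - 1) * lam g := by
      rw [← pow_succ, hg1]
    have hpow : lam g ^ g * (lam g - 1) = lam g := by
      rw [hpoweq]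
      linear_combination lam g * hkey
    have hppos : (0 : ℝ) < lam g ^ g := pow_pos hlpos g
    have hinv : (lam g ^ g)⁻¹ = (lam g - 1) / lam g := by
      field_simp
      linarith [hpow]
    have hz : lam g ^ (-(g : ℤ)) = (lam g ^ g)⁻¹ := by
      rw [zpow_neg, zpow_natCast]
    rw [hz, hinv]
    ring
  have hfinal : Tendsto (fun g : ℕ => ((lam g - 1) * ((g : ℝ) / Real.log g)) / lam g)
      atTop (nhds 1) := by
    have := M.div hLAM one_ne_zero
    rw [div_one] at this; exact this
  exact hfinal.congr' hEq.symm
end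

section
/- Index the Fibonacci numbers F_1 = 1, F_2 = 2, F_3 = 3, F_4 = 5, …. For all integers n ≥ 1 and k ≥ 0, the number of integers m ∈ [F_n, F_{n+1}) whose Zeckendorf decomposition consists of exactly k+1 summands equals the binomial coefficient C(n−k−1, k) (interpreted as 0 when k > n−k−1 or n−k−1 < 0). -/
open scoped Classical

/-- The Fibonacci numbers indexed as `F 1 = 1, F 2 = 2, F 3 = 3, F 4 = 5, …`,
so `F (n+1) = F n + F (n-1)`. -/
def F (n : ℕ) : ℕ := Nat.fib (n + 1)

/-- A Zeckendorf index set: indices are `≥ 1` and pairwise non-adjacent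
(any two distinct indices differ by at least `2`). -/
def IsZeck (S : Finset ℕ) : Prop :=
  (∀ i ∈ S, 1 ≤ i) ∧ ∀ i ∈ S, ∀ j ∈ S, i < j → 2 ≤ j - i

lemma F_pos (n : ℕ) : 0 < F n := Nat.fib_pos.mpr (Nat.succ_pos n)

lemma F_mono : Monotone F := fun a b h => Nat.fib_mono (by omega)

lemma F_add {j : ℕ} (hj : 1 ≤ j) : F (j + 1) = F j + F (j - 1) := by
  obtain ⟨i, rfl⟩ : ∃ i, j = i + 1 := ⟨j - 1, by omega⟩
  simp only [F, Nat.add_sub_cancel]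
  rw [show i + 1 + 1 + 1 = (i + 1) + 2 by ring, Nat.fib_add_two]
  omega

lemma IsZeck.subset {S T : Finset ℕ} (h : IsZeck T) (hST : S ⊆ T) : IsZeck S :=
  ⟨fun i hi => h.1 i (hST hi), fun i hi j hj => h.2 i (hST hi) j (hST hj)⟩

/-- Upper bound: a Zeck sum with all indices `≤ M` is `< F (M+1)`. -/
lemma zeck_sum_lt (M : ℕ) : ∀ S : Finset ℕ, IsZeck S → (∀ i ∈ S, i ≤ M) →
    ∑ i ∈ S, F i < F (M + 1) := by
  induction M using Nat.strong_induction_on with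
  | _ M IH =>
    intro S hS hSM
    rcases S.eq_empty_or_nonempty with rfl | hne
    · simpa using F_pos (M + 1)
    · obtain ⟨j, hjd⟩ : ∃ j, j = S.max' hne := ⟨_, rfl⟩
      have hjS : j ∈ S := hjd ▸ S.max'_mem hne
      have hjmax : ∀ i ∈ S, i ≤ j := fun i hi => hjd ▸ S.le_max' i hi
      have hj1 : 1 ≤ j := hS.1 j hjS
      have hjM : j ≤ M := hSM j hjS
      have hsub : ∀ i ∈ S.erase j, i ≤ j - 2 := by
        intro i hi
        have hiS := Finset.mem_of_mem_erase hi
        have hij : i < j := lt_of_le_of_ne (hjmax i hiS) (Finset.ne_of_mem_erase hi)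
        have := hS.2 i hiS j hjS hij
        omega
      have hM1 : 1 ≤ M := le_trans hj1 hjM
      have herase : ∑ i ∈ S.erase j, F i < F (j - 2 + 1) :=
        IH (j - 2) (by omega) _ (hS.subset (S.erase_subset j)) hsub
      have hsum : ∑ i ∈ S.erase j, F i + F j = ∑ i ∈ S, F i :=
        Finset.sum_erase_add S F hjS
      have hle : F (j - 2 + 1) ≤ F (j - 1) := by
        rcases Nat.eq_or_lt_of_le hj1 with h1 | h2
        · rw [← h1]; norm_num [F]
        · rw [show j - 2 + 1 = j - 1 by omega]
      have : ∑ i ∈ S, F i < F (j - 1) + F j := by omega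
      calc ∑ i ∈ S, F i < F (j - 1) + F j := this
        _ = F (j + 1) := by rw [F_add hj1]; ring
        _ ≤ F (M + 1) := F_mono (by omega)

/-- Uniqueness of Zeckendorf representations. -/
lemma zeck_sum_inj : ∀ m : ℕ, ∀ S T : Finset ℕ, IsZeck S → IsZeck T →
    ∑ i ∈ S, F i = m → ∑ i ∈ T, F i = m → S = T := by
  intro m
  induction m using Nat.strong_induction_on with
  | _ m IH =>
    intro S T hS hT hSm hTm
    rcases S.eq_empty_or_nonempty with rfl | hSne
    · simp at hSm
      rcases T.eq_empty_or_nonempty with rfl | hTne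
      · rfl
      · exfalso
        have : 0 < ∑ i ∈ T, F i :=
          Finset.sum_pos (fun i _ => F_pos i) hTne
        omega
    rcases T.eq_empty_or_nonempty with rfl | hTne
    · exfalso
      have : 0 < ∑ i ∈ S, F i := Finset.sum_pos (fun i _ => F_pos i) hSne
      simp at hTm; omega
    obtain ⟨a, had⟩ : ∃ a, a = S.max' hSne := ⟨_, rfl⟩
    obtain ⟨b, hbd⟩ : ∃ b, b = T.max' hTne := ⟨_, rfl⟩
    have haS : a ∈ S := had ▸ S.max'_mem hSne
    have hbT : b ∈ T := hbd ▸ T.max'_mem hTne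
    have hamax : ∀ i ∈ S, i ≤ a := fun i hi => had ▸ S.le_max' i hi
    have hbmax : ∀ i ∈ T, i ≤ b := fun i hi => hbd ▸ T.le_max' i hi
    have hFa : F a ≤ m := hSm ▸ Finset.single_le_sum (fun i _ => Nat.zero_le _) haS
    have hFb : F b ≤ m := hTm ▸ Finset.single_le_sum (fun i _ => Nat.zero_le _) hbT
    have hma : m < F (a + 1) := hSm ▸ zeck_sum_lt a S hS hamax
    have hmb : m < F (b + 1) := hTm ▸ zeck_sum_lt b T hT hbmax
    have hab : a = b := by
      by_contra hne
      rcases Nat.lt_or_ge a b with h | h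
      · have : F (a + 1) ≤ F b := F_mono (by omega)
        omega
      · have h' : b < a := by omega
        have : F (b + 1) ≤ F a := F_mono (by omega)
        omega
    rw [← hab] at hbT
    have hsumS : ∑ i ∈ S.erase a, F i + F a = m := by
      rw [Finset.sum_erase_add S F haS]; exact hSm
    have hsumT : ∑ i ∈ T.erase a, F i + F a = m := by
      rw [Finset.sum_erase_add T F hbT]; exact hTm
    have hFapos := F_pos a
    have hlt : m - F a < m := by omega
    have heq : S.erase a = T.erase a :=
      IH (m - F a) hlt _ _ (hS.subset (S.erase_subset a)) (hT.subset (T.erase_subset a))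
        (by omega) (by omega)
    have : insert a (S.erase a) = insert a (T.erase a) := by rw [heq]
    rwa [Finset.insert_erase haS, Finset.insert_erase hbT] at this

/-- The finset of Zeck subsets of `[1, m]` of cardinality `k`. -/
noncomputable def Zk (m k : ℕ) : Finset (Finset ℕ) :=
  ((Finset.Icc 1 m).powersetCard k).filter IsZeck

lemma Zk_card : ∀ m k : ℕ, (Zk m k).card = (m + 1 - k).choose k := by
  intro m
  induction m using Nat.strong_induction_on with
  | _ m IH =>
    intro k
    match k with
    | 0 =>
      have : Zk m 0 = {∅} := by
        rw [Zk, Finset.powersetCard_zero]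
        apply Finset.filter_eq_self.mpr
        intro S hS
        simp only [Finset.mem_singleton] at hS
        subst hS
        exact ⟨by simp, by simp⟩
      rw [this]; simp
    | k + 1 =>
      match m with
      | 0 =>
        have hz0 : Zk 0 (k+1) = ∅ := by
          rw [Zk]
          have h00 : ((Finset.Icc 1 0).powersetCard (k+1)) = ∅ := by
            rw [Finset.powersetCard_eq_empty]
            simp
          rw [h00, Finset.filter_empty]
        rw [hz0]; simp
      | m + 1 =>
        -- split on whether m+1 ∈ S
        have hsplit := Finset.card_filter_add_card_filter_not
          (s := Zk (m+1) (k+1)) (fun S => (m+1) ∈ S)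
        have h1 : ((Zk (m+1) (k+1)).filter (fun S => ¬ (m+1) ∈ S)) = Zk m (k+1) := by
          ext S
          simp only [Zk, Finset.mem_filter, Finset.mem_powersetCard]
          constructor
          · rintro ⟨⟨⟨hsub, hcard⟩, hz⟩, hnm⟩
            refine ⟨⟨?_, hcard⟩, hz⟩
            intro x hx
            have hxne : x ≠ m + 1 := fun h => hnm (h ▸ hx)
            have hxm := hsub hx
            simp only [Finset.mem_Icc] at hxm ⊢
            omega
          · rintro ⟨⟨hsub, hcard⟩, hz⟩
            have hnm : (m+1) ∉ S := fun h => by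
              have := hsub h; simp only [Finset.mem_Icc] at this; omega
            refine ⟨⟨⟨?_, hcard⟩, hz⟩, hnm⟩
            intro x hx
            have := hsub hx
            simp only [Finset.mem_Icc] at this ⊢
            omega
        have h2 : ((Zk (m+1) (k+1)).filter (fun S => (m+1) ∈ S)).card = (Zk (m-1) k).card := by
          refine Finset.card_bij' (fun S _ => S.erase (m+1)) (fun T _ => insert (m+1) T)
            ?hi ?hj ?left ?right
          · intro S hS
            simp only [Finset.mem_filter, Zk, Finset.mem_powersetCard] at hS ⊢
            obtain ⟨⟨⟨hsub, hcard⟩, hz⟩, hm⟩ := hS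
            refine ⟨⟨?_, ?_⟩, hz.subset (S.erase_subset _)⟩
            · intro x hx
              have hxS := Finset.mem_of_mem_erase hx
              have hxne := Finset.ne_of_mem_erase hx
              have hxlt : x < m + 1 := by
                have := hsub hxS; simp only [Finset.mem_Icc] at this; omega
              have := hz.2 x hxS (m+1) hm hxlt
              have hx1 := hz.1 x hxS
              simp only [Finset.mem_Icc]; omega
            · rw [Finset.card_erase_of_mem hm, hcard]
              omega
          · intro T hT
            simp only [Finset.mem_filter, Zk, Finset.mem_powersetCard] at hT ⊢
            obtain ⟨⟨hsub, hcard⟩, hz⟩ := hT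
            have hbound : ∀ x ∈ T, 1 ≤ x ∧ x ≤ m - 1 := fun x hx => by
              have := hsub hx; simp only [Finset.mem_Icc] at this; exact this
            have hnm : (m+1) ∉ T := fun h => by have := hbound _ h; omega
            refine ⟨⟨⟨?_, ?_⟩, ?_, ?_⟩, Finset.mem_insert_self _ _⟩
            · intro x hx
              simp only [Finset.mem_insert] at hx
              simp only [Finset.mem_Icc]
              rcases hx with rfl | hx
              · omega
              · have := hbound x hx; omega
            · rw [Finset.card_insert_of_notMem hnm, hcard]
            · intro i hi
              simp only [Finset.mem_insert] at hi
              rcases hi with rfl | hi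
              · omega
              · exact hz.1 i hi
            · intro i hi j hj hij
              simp only [Finset.mem_insert] at hi hj
              rcases hi with rfl | hi <;> rcases hj with rfl | hj
              · omega
              · have := hbound j hj; omega
              · have := hbound i hi; omega
              · exact hz.2 i hi j hj hij
          · intro S hS
            simp only [Finset.mem_filter] at hS
            exact Finset.insert_erase hS.2
          · intro T hT
            simp only [Finset.mem_filter, Zk, Finset.mem_powersetCard] at hT
            have hnm : (m+1) ∉ T := fun h => by
              have := hT.1.1 h; simp only [Finset.mem_Icc] at this; omega
            exact Finset.erase_insert hnm
        have hIH1 := IH m (by omega) (k+1)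
        have hIH2 := IH (m-1) (by omega) k
        rw [h2, hIH2] at hsplit
        rw [h1, hIH1] at hsplit
        -- hsplit : (m+1-(k+1)).choose (k+1) + (m-1+1-k).choose k = (Zk (m+1) (k+1)).card
        rw [← hsplit]
        by_cases hmk : k ≤ m
        · rcases Nat.eq_zero_or_pos m with rfl | hm
          · have : k = 0 := by omega
            subst this
            norm_num
          · rw [show m + 1 + 1 - (k + 1) = (m - k) + 1 by omega,
                show m + 1 - (k + 1) = m - k by omega,
                show m - 1 + 1 - k = m - k by omega,
                Nat.choose_succ_succ]
            try omega
        · rw [show m + 1 + 1 - (k + 1) = 0 by omega,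
              show m + 1 - (k + 1) = 0 by omega,
              show m - 1 + 1 - k = 0 by omega,
              Nat.choose_eq_zero_of_lt (show 0 < k + 1 by omega),
              Nat.choose_eq_zero_of_lt (show 0 < k by omega)]

/-- For all `n ≥ 1` and `k ≥ 0`, the number of integers
`m ∈ [F_n, F_{n+1})` whose Zeckendorf decomposition consists of exactly `k+1` summands
equals the binomial coefficient `C(n−k−1, k)` (which is `0` in the degenerate cases). -/
theorem zeckendorf_summand_count (n k : ℕ) (hn : 1 ≤ n) :
    {m : ℕ | F n ≤ m ∧ m < F (n + 1) ∧
      ∃ S : Finset ℕ, IsZeck S ∧ S.card = k + 1 ∧ m = ∑ i ∈ S, F i}.ncard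
      = Nat.choose (n - k - 1) k := by
  classical
  set W : Finset (Finset ℕ) :=
    ((Finset.Icc 1 n).powersetCard (k+1)).filter (fun S => IsZeck S ∧ n ∈ S) with hW
  have hWmem : ∀ S, S ∈ W ↔ (S ⊆ Finset.Icc 1 n ∧ S.card = k + 1) ∧ IsZeck S ∧ n ∈ S := by
    intro S
    rw [hW]
    simp only [Finset.mem_filter, Finset.mem_powersetCard]
  -- Step A: the set is the image of W under the Fibonacci sum
  have hset : {m : ℕ | F n ≤ m ∧ m < F (n + 1) ∧
      ∃ S : Finset ℕ, IsZeck S ∧ S.card = k + 1 ∧ m = ∑ i ∈ S, F i}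
      = ↑(W.image (fun S => ∑ i ∈ S, F i)) := by
    ext m
    simp only [Set.mem_setOf_eq, Finset.coe_image, Set.mem_image, Finset.mem_coe]
    constructor
    · rintro ⟨h1, h2, S, hzS, hcard, rfl⟩
      refine ⟨S, ?_, rfl⟩
      have hSne : S.Nonempty := Finset.card_pos.mp (by omega)
      obtain ⟨a, had⟩ : ∃ a, a = S.max' hSne := ⟨_, rfl⟩
      have haS : a ∈ S := had ▸ S.max'_mem hSne
      have hamax : ∀ i ∈ S, i ≤ a := fun i hi => had ▸ S.le_max' i hi
      have hFa : F a ≤ ∑ i ∈ S, F i :=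
        Finset.single_le_sum (fun i _ => Nat.zero_le _) haS
      have hma : ∑ i ∈ S, F i < F (a + 1) := zeck_sum_lt a S hzS hamax
      have han : a = n := by
        by_contra hne
        rcases Nat.lt_or_ge a n with h | h
        · have : F (a + 1) ≤ F n := F_mono (by omega)
          omega
        · have h' : n < a := by omega
          have : F (n + 1) ≤ F a := F_mono (by omega)
          omega
      rw [hWmem]
      refine ⟨⟨?_, hcard⟩, hzS, han ▸ haS⟩
      intro x hx
      simp only [Finset.mem_Icc]
      exact ⟨hzS.1 x hx, han ▸ hamax x hx⟩
    · rintro ⟨S, hSW, rfl⟩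
      rw [hWmem] at hSW
      obtain ⟨⟨hsub, hcard⟩, hz, hnS⟩ := hSW
      refine ⟨?_, ?_, S, hz, hcard, rfl⟩
      · exact Finset.single_le_sum (fun i _ => Nat.zero_le _) hnS
      · exact zeck_sum_lt n S hz (fun i hi => by
          have := hsub hi; simp only [Finset.mem_Icc] at this; omega)
  rw [hset, Set.ncard_coe_finset]
  have hinj : Set.InjOn (fun S => ∑ i ∈ S, F i) ↑W := by
    intro S hS T hT hsum
    simp only [Finset.mem_coe] at hS hT
    rw [hWmem] at hS hT
    exact zeck_sum_inj _ S T hS.2.1 hT.2.1 hsum rfl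
  rw [Finset.card_image_of_injOn hinj]
  -- Step C: bijection with Zk (n-2) k
  have hcardW : W.card = (Zk (n - 2) k).card := by
    refine Finset.card_bij' (fun S _ => S.erase n) (fun T _ => insert n T) ?hi ?hj ?left ?right
    · intro S hS
      rw [hWmem] at hS
      obtain ⟨⟨hsub, hcard⟩, hz, hnS⟩ := hS
      simp only [Zk, Finset.mem_filter, Finset.mem_powersetCard]
      refine ⟨⟨?_, ?_⟩, hz.subset (S.erase_subset _)⟩
      · intro x hx
        have hxS := Finset.mem_of_mem_erase hx
        have hxne := Finset.ne_of_mem_erase hx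
        have hxlt : x < n := by
          have := hsub hxS; simp only [Finset.mem_Icc] at this; omega
        have := hz.2 x hxS n hnS hxlt
        have hx1 := hz.1 x hxS
        simp only [Finset.mem_Icc]
        omega
      · rw [Finset.card_erase_of_mem hnS, hcard]
        omega
    · intro T hT
      simp only [Zk, Finset.mem_filter, Finset.mem_powersetCard] at hT
      obtain ⟨⟨hsub, hcard⟩, hz⟩ := hT
      have hbound : ∀ x ∈ T, 1 ≤ x ∧ x ≤ n - 2 := fun x hx => by
        have := hsub hx; simp only [Finset.mem_Icc] at this; exact this
      have hnT : n ∉ T := fun h => by have := hbound _ h; omega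
      rw [hWmem]
      refine ⟨⟨?_, ?_⟩, ⟨?_, ?_⟩, Finset.mem_insert_self _ _⟩
      · intro x hx
        simp only [Finset.mem_insert] at hx
        simp only [Finset.mem_Icc]
        rcases hx with rfl | hx
        · omega
        · have := hbound x hx; omega
      · rw [Finset.card_insert_of_notMem hnT, hcard]
      · intro i hi
        simp only [Finset.mem_insert] at hi
        rcases hi with rfl | hi
        · omega
        · exact hz.1 i hi
      · intro i hi j hj hij
        simp only [Finset.mem_insert] at hi hj
        rcases hi with rfl | hi <;> rcases hj with rfl | hj
        · omega
        · have := hbound j hj; omega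
        · have := hbound i hi; omega
        · exact hz.2 i hi j hj hij
    · intro S hS
      rw [hWmem] at hS
      exact Finset.insert_erase hS.2.2
    · intro T hT
      simp only [Zk, Finset.mem_filter, Finset.mem_powersetCard] at hT
      have hnT : n ∉ T := fun h => by
        have := hT.1.1 h; simp only [Finset.mem_Icc] at this; omega
      exact Finset.erase_insert hnT
  rw [hcardW, Zk_card]
  rcases Nat.eq_zero_or_pos k with rfl | hk
  · simp
  · rw [show n - 2 + 1 - k = n - k - 1 by omega]
end
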